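/- arXiv:2112.14738 — 2 statements merged into one kernel-verified Lean document; each statement's English description precedes it below -/
import Mathlib

section
/- Let Λ = diag(λ₁, …, λ_d) with λ₁ > λ₂ > ⋯ > λ_d and minimal gap λ_gap = min_i (λ_i − λ_{i+1}). Let w be a unit vector, let R = wᵀΛw, and suppose ‖Λw − Rw‖ ≤ λ_gap γ₁ for some γ₁ ∈ (0, 1/2), and that R ∈ [(λ_{j-1}+λ_j)/2, (λ_j+λ_{j+1})/2] for some index j (with λ₀ = λ₁ and λ_{d+1} = λ_d). Then (e_jᵀ w)² ≥ 1 − 4γ₁². -/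
theorem approx_eigenvector_alignment (d : ℕ) (hd : 1 ≤ d) (lam : ℕ → ℝ)
    (hlam0 : lam 0 = lam 1) (hlamd : lam (d+1) = lam d)
    (hdec : ∀ i, 1 ≤ i → i < d → lam (i+1) < lam i)
    (lamGap : ℝ) (hGap0 : 0 < lamGap)
    (hGapLe : ∀ i, 1 ≤ i → i < d → lamGap ≤ lam i - lam (i+1))
    (w : EuclideanSpace ℝ (Fin d)) (hw : ‖w‖ = 1)
    (γ : ℝ) (hγ0 : 0 < γ) (hγhalf : γ < 1/2)
    (R : ℝ) (hR : R = ∑ i : Fin d, lam (i.val + 1) * (w i)^2)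
    (hgrad : ‖(show EuclideanSpace ℝ (Fin d) from WithLp.toLp 2 (fun i => lam (i.val + 1) * w i)) - R • w‖
      ≤ lamGap * γ)
    (j : ℕ) (hj1 : 1 ≤ j) (hjd : j ≤ d)
    (hRlo : (lam j + lam (j+1)) / 2 ≤ R)
    (hRhi : R ≤ (lam (j-1) + lam j) / 2) :
    1 - 4 * γ^2 ≤ (w ⟨j-1, by omega⟩)^2 := by
  -- monotonicity of lam on [1, d]
  have lam_mono : ∀ a b : ℕ, 1 ≤ a → a ≤ b → b ≤ d → lam b ≤ lam a := by
    intro a b ha hab hbd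
    induction b with
    | zero => omega
    | succ n ih =>
      rcases Nat.lt_or_ge a (n+1) with h | h
      · exact le_trans (hdec n (by omega) (by omega)).le (ih (by omega) (by omega))
      · have : a = n + 1 := by omega
        subst this; exact le_refl _
  set j0 : Fin d := ⟨j-1, by omega⟩ with hj0
  -- squared norm identity
  have hnorm : ∑ i : Fin d, (lam (i.val + 1) - R)^2 * (w i)^2 ≤ (lamGap * γ)^2 := by
    have h1 := hgrad
    rw [EuclideanSpace.norm_eq] at h1
    have h2 : Real.sqrt (∑ i : Fin d,
        ‖((show EuclideanSpace ℝ (Fin d) from WithLp.toLp 2 (fun i => lam (i.val + 1) * w i)) - R • w) i‖ ^ 2)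
        ^ 2 ≤ (lamGap * γ)^2 := by
      have := Real.sqrt_nonneg (∑ i : Fin d,
        ‖((show EuclideanSpace ℝ (Fin d) from WithLp.toLp 2 (fun i => lam (i.val + 1) * w i)) - R • w) i‖ ^ 2)
      nlinarith
    rw [Real.sq_sqrt (by positivity)] at h2
    refine le_trans (le_of_eq ?_) h2
    apply Finset.sum_congr rfl
    intro i _
    have : ((show EuclideanSpace ℝ (Fin d) from WithLp.toLp 2 (fun i => lam (i.val + 1) * w i)) - R • w) i
        = lam (i.val + 1) * w i - R * w i := rfl
    rw [this, Real.norm_eq_abs, sq_abs]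
    ring
  have hwsum : ∑ i : Fin d, (w i)^2 = 1 := by
    have := hw
    rw [EuclideanSpace.norm_eq] at this
    have h2 : ∑ i : Fin d, ‖w i‖ ^ 2 = 1 := by
      have hnn : (0:ℝ) ≤ ∑ i : Fin d, ‖w i‖ ^ 2 := by positivity
      nlinarith [Real.sq_sqrt hnn, this]
    simpa [Real.norm_eq_abs, sq_abs] using h2
  -- pointwise lower bound off j0
  have key : ∀ i : Fin d, i ≠ j0 → (lamGap/2)^2 * (w i)^2 ≤ (lam (i.val + 1) - R)^2 * (w i)^2 := by
    intro i hi
    have hk1 : 1 ≤ i.val + 1 := by omega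
    have hkd : i.val + 1 ≤ d := i.isLt
    have hne : i.val + 1 ≠ j := by
      intro h
      apply hi
      apply Fin.ext
      simp [hj0]; omega
    have habs : lamGap / 2 ≤ |lam (i.val + 1) - R| := by
      rcases Nat.lt_or_ge (i.val + 1) j with h | h
      · -- k < j, so j ≥ 2, k ≤ j-1
        have hj2 : 2 ≤ j := by omega
        have hmono : lam (j-1) ≤ lam (i.val + 1) :=
          lam_mono (i.val+1) (j-1) hk1 (by omega) (by omega)
        have hgap : lamGap ≤ lam (j-1) - lam j := by
          have := hGapLe (j-1) (by omega) (by omega)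
          have hjj : j - 1 + 1 = j := by omega
          rwa [hjj] at this
        rw [abs_of_nonneg (by linarith)]
        linarith
      · -- k > j, so j < d
        have hk : j + 1 ≤ i.val + 1 := by omega
        have hjlt : j < d := by omega
        have hmono : lam (i.val + 1) ≤ lam (j+1) :=
          lam_mono (j+1) (i.val+1) (by omega) hk hkd
        have hgap : lamGap ≤ lam j - lam (j+1) := hGapLe j hj1 hjlt
        rw [abs_of_nonpos (by linarith), neg_sub]
        linarith
    have hsq : (lamGap/2)^2 ≤ (lam (i.val + 1) - R)^2 := by
      have h1 : (lamGap/2)^2 ≤ |lam (i.val + 1) - R|^2 := by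
        apply pow_le_pow_left₀ (by positivity) habs
      rwa [sq_abs] at h1
    exact mul_le_mul_of_nonneg_right hsq (sq_nonneg _)
  -- sum over erase
  have hsplit1 : (w j0)^2 + ∑ i ∈ Finset.univ.erase j0, (w i)^2 = 1 := by
    rw [← hwsum]
    exact Finset.add_sum_erase Finset.univ (fun i : Fin d => (w i)^2) (Finset.mem_univ j0)
  have hsum2 : ∑ i ∈ Finset.univ.erase j0, (lam (i.val + 1) - R)^2 * (w i)^2
      ≤ (lamGap * γ)^2 := by
    refine le_trans (Finset.sum_le_sum_of_subset_of_nonneg (Finset.erase_subset _ _) ?_) hnorm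
    intro i _ _; positivity
  have hsum3 : (lamGap/2)^2 * (1 - (w j0)^2) ≤ (lamGap * γ)^2 := by
    have h1 : ∑ i ∈ Finset.univ.erase j0, (lamGap/2)^2 * (w i)^2
        ≤ ∑ i ∈ Finset.univ.erase j0, (lam (i.val + 1) - R)^2 * (w i)^2 := by
      apply Finset.sum_le_sum
      intro i hi
      exact key i (Finset.ne_of_mem_erase hi)
    rw [← Finset.mul_sum] at h1
    have h2 : ∑ i ∈ Finset.univ.erase j0, (w i)^2 = 1 - (w j0)^2 := by linarith
    rw [h2] at h1
    linarith
  nlinarith [sq_nonneg lamGap, sq_nonneg γ, mul_pos hGap0 hGap0]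
end

section
/- Let A, B be symmetric matrices with B positive definite and suppose B^{-1/2} A B^{-1/2} has distinct eigenvalues λ₁ > λ₂ > ⋯ > λ_d. Let v_j be a unit vector with A v_j = λ_j B v_j (j ≥ 2) and v₁ a unit vector with A v₁ = λ₁ B v₁. Then for the manifold Hessian H(v_j) = −2[A − λ_j B]/(v_jᵀ B v_j) and any scalar c, (v₁ − c v_j)ᵀ H(v_j) (v₁ − c v_j) = −2(λ₁ − λ_j)(v₁ᵀ B v₁)/(v_jᵀ B v_j) ≤ −2(λ₁ − λ₂) λ_min(B)/‖B‖. -/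
open Matrix

lemma symm_dot_swap {d : ℕ} (M : Matrix (Fin d) (Fin d) ℝ) (hM : M.IsSymm)
    (u w : Fin d → ℝ) : u ⬝ᵥ M.mulVec w = w ⬝ᵥ M.mulVec u := by
  rw [Matrix.dotProduct_mulVec, ← Matrix.mulVec_transpose, hM, dotProduct_comm]

theorem manifold_hessian_negative_curvature (d : ℕ) (hd : 1 < d)
    (A B : Matrix (Fin d) (Fin d) ℝ) (hA : A.IsSymm) (hB : B.PosDef)
    (lam : Fin d → ℝ) (hdec : ∀ i k : Fin d, i < k → lam k < lam i)
    (lamB Bnorm : ℝ) (hlamB : 0 < lamB)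
    (hBlo : ∀ v : Fin d → ℝ, lamB * (v ⬝ᵥ v) ≤ v ⬝ᵥ B.mulVec v)
    (hBhi : ∀ v : Fin d → ℝ, v ⬝ᵥ B.mulVec v ≤ Bnorm * (v ⬝ᵥ v))
    (j : Fin d) (hj : 1 ≤ j.val)
    (vj v1 : Fin d → ℝ) (hvj : vj ⬝ᵥ vj = 1) (hv1 : v1 ⬝ᵥ v1 = 1)
    (hevj : A.mulVec vj = lam j • B.mulVec vj)
    (hev1 : A.mulVec v1 = lam ⟨0, by omega⟩ • B.mulVec v1)
    (c : ℝ) :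
    (v1 - c • vj) ⬝ᵥ
        (((-2 : ℝ) / (vj ⬝ᵥ B.mulVec vj)) • (A - lam j • B)).mulVec (v1 - c • vj)
      = -2 * (lam ⟨0, by omega⟩ - lam j) * (v1 ⬝ᵥ B.mulVec v1) / (vj ⬝ᵥ B.mulVec vj) ∧
    (v1 - c • vj) ⬝ᵥ
        (((-2 : ℝ) / (vj ⬝ᵥ B.mulVec vj)) • (A - lam j • B)).mulVec (v1 - c • vj)
      ≤ -2 * (lam ⟨0, by omega⟩ - lam ⟨1, hd⟩) * lamB / Bnorm := by
  set i0 : Fin d := ⟨0, by omega⟩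
  set i1 : Fin d := ⟨1, hd⟩
  have hBsymm : B.IsSymm := by
    ext i k
    simpa using hB.isHermitian.apply i k
  have hvjne : vj ≠ 0 := by
    intro h; rw [h] at hvj; simp [dotProduct] at hvj
  have hv1ne : v1 ≠ 0 := by
    intro h; rw [h] at hv1; simp [dotProduct] at hv1
  have hq : 0 < vj ⬝ᵥ B.mulVec vj := hB.dotProduct_mulVec_pos hvjne
  have hp : 0 < v1 ⬝ᵥ B.mulVec v1 := hB.dotProduct_mulVec_pos hv1ne
  have h01 : lam i1 < lam i0 := hdec i0 i1 (by simp [i0, i1, Fin.lt_def])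
  have hj1 : lam j ≤ lam i1 := by
    rcases eq_or_lt_of_le (show i1 ≤ j from by simpa [i1, Fin.le_def] using hj) with h | h
    · rw [← h]
    · exact (hdec i1 j h).le
  have h0j : lam j < lam i0 := lt_of_le_of_lt hj1 h01
  -- B-orthogonality
  have hAsw : vj ⬝ᵥ A.mulVec v1 = v1 ⬝ᵥ A.mulVec vj := symm_dot_swap A hA vj v1
  have hBsw : vj ⬝ᵥ B.mulVec v1 = v1 ⬝ᵥ B.mulVec vj := symm_dot_swap B hBsymm vj v1
  have horth : vj ⬝ᵥ B.mulVec v1 = 0 := by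
    rw [hev1, hevj] at hAsw
    rw [dotProduct_smul, dotProduct_smul, hBsw] at hAsw
    simp only [smul_eq_mul] at hAsw
    have : (lam i0 - lam j) * (v1 ⬝ᵥ B.mulVec vj) = 0 := by linarith [hAsw]
    have h2 : v1 ⬝ᵥ B.mulVec vj = 0 := by
      rcases mul_eq_zero.mp this with h | h
      · exact absurd h (by linarith)
      · exact h
    rw [hBsw, h2]
  -- the quadratic form value
  have key : (v1 - c • vj) ⬝ᵥ
      (((-2 : ℝ) / (vj ⬝ᵥ B.mulVec vj)) • (A - lam j • B)).mulVec (v1 - c • vj)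
      = -2 * (lam i0 - lam j) * (v1 ⬝ᵥ B.mulVec v1) / (vj ⬝ᵥ B.mulVec vj) := by
    have hM1 : (A - lam j • B).mulVec v1 = (lam i0 - lam j) • B.mulVec v1 := by
      rw [Matrix.sub_mulVec, Matrix.smul_mulVec, hev1, sub_smul]
    have hMj : (A - lam j • B).mulVec vj = 0 := by
      rw [Matrix.sub_mulVec, Matrix.smul_mulVec, hevj, sub_self]
    rw [Matrix.smul_mulVec, dotProduct_smul, Matrix.mulVec_sub,
      Matrix.mulVec_smul, hM1, hMj, smul_zero, sub_zero, sub_dotProduct,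
      smul_dotProduct, dotProduct_smul, dotProduct_smul, horth]
    have hqne : vj ⬝ᵥ B.mulVec vj ≠ 0 := hq.ne'
    simp only [smul_eq_mul, mul_zero, sub_zero]
    rw [div_mul_eq_mul_div]
    congr 1
    ring
  refine ⟨key, ?_⟩
  rw [key]
  have hqB : vj ⬝ᵥ B.mulVec vj ≤ Bnorm := by simpa [hvj] using hBhi vj
  have hpB : lamB ≤ v1 ⬝ᵥ B.mulVec v1 := by simpa [hv1] using hBlo v1
  have hBnorm : 0 < Bnorm := lt_of_lt_of_le hq hqB
  rw [div_le_div_iff₀ hq hBnorm]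
  nlinarith [mul_pos hq hBnorm, sub_pos.mpr h01, sub_pos.mpr h0j,
    mul_le_mul (sub_le_sub_left hj1 (lam i0)) hpB hlamB.le (sub_pos.mpr h0j).le,
    mul_le_mul_of_nonneg_left hqB (mul_nonneg (sub_pos.mpr h01).le hlamB.le)]
end
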